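/- For the Hermite weight w₀(x) = e^{−x²} on ℝ, the Hankel determinant of moments satisfies det( ∫_ℝ x^{i+j} e^{−x²} dx )_{i,j=0}^{n-1} = π^{n/2} ∏_{i=0}^{n-1} i! / 2^i. -/

import Mathlib

open MeasureTheory

open Finset Filter Real
open scoped Matrix

noncomputable def hermC : ℕ → ℕ → ℝ
  | 0, 0 => 1
  | 0, _+1 => 0
  | n+1, 0 => (1/2) * hermC n 1
  | n+1, k+1 => hermC n k + ((k:ℝ)+2)/2 * hermC n (k+2)

noncomputable def hermH : ℕ → ℝ
  | 0 => Real.sqrt Real.pi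
  | k+1 => ((k:ℝ)+1)/2 * hermH k

lemma hermC_succ_succ (n k : ℕ) :
    hermC (n+1) (k+1) = hermC n k + ((k:ℝ)+2)/2 * hermC n (k+2) := rfl

lemma hermC_succ_zero (n : ℕ) : hermC (n+1) 0 = (1/2) * hermC n 1 := rfl

lemma hermC_zero : ∀ n k : ℕ, n < k → hermC n k = 0 := by
  intro n
  induction n with
  | zero => intro k hk; match k, hk with | (k+1), _ => rfl
  | succ n ih =>
    intro k hk
    match k, hk with
    | (k+1), hk =>
      rw [hermC_succ_succ, ih k (by omega), ih (k+2) (by omega)]; ring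

lemma hermC_diag (n : ℕ) : hermC n n = 1 := by
  induction n with
  | zero => rfl
  | succ n ih =>
    rw [hermC_succ_succ, ih, hermC_zero n (n+2) (by omega)]; ring

lemma hermC_G : ∀ n k : ℕ, ((k:ℝ)+1) * ((k:ℝ)+2) * hermC n (k+2) = 2 * ((n:ℝ) - (k:ℝ)) * hermC n k := by
  intro n
  induction n with
  | zero =>
    intro k
    rw [hermC_zero 0 (k+2) (by omega)]
    match k with
    | 0 => simp [hermC]
    | (k+1) => rw [hermC_zero 0 (k+1) (by omega)]; ring
  | succ n ih =>
    intro k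
    match k with
    | 0 =>
      have h1 := ih 1
      rw [show (0:ℕ)+2 = 1+1 from rfl, hermC_succ_succ, hermC_succ_zero]
      push_cast at h1 ⊢
      nlinarith [h1]
    | (k+1) =>
      have h1 := ih k
      have h2 := ih (k+2)
      rw [show k+1+2 = (k+2)+1 from rfl, hermC_succ_succ, hermC_succ_succ]
      push_cast at h1 h2 ⊢
      nlinarith [h1, h2]

lemma hermC_step (m : ℕ) : hermC (m+2) 0 = ((m:ℝ)+1)/2 * hermC m 0 := by
  have hG := hermC_G m 0
  rw [hermC_succ_zero, hermC_succ_succ m 0]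
  push_cast at hG ⊢
  nlinarith [hG]

lemma integrable_pow_exp (k : ℕ) :
    Integrable (fun x : ℝ => x ^ k * Real.exp (-x ^ 2)) := by
  have g1 : Integrable (fun x : ℝ => Real.exp (-(x - 1/2) ^ 2)) := by
    simpa using (integrable_exp_neg_mul_sq (b := 1) one_pos).comp_sub_right (1/2)
  have g2 : Integrable (fun x : ℝ => Real.exp (-(x + 1/2) ^ 2)) := by
    simpa using (integrable_exp_neg_mul_sq (b := 1) one_pos).comp_add_right (1/2)
  have hg : Integrable (fun x : ℝ =>
      (k.factorial : ℝ) * Real.exp (1/4) *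
        (Real.exp (-(x - 1/2) ^ 2) + Real.exp (-(x + 1/2) ^ 2))) :=
    (g1.add g2).const_mul _
  refine hg.mono' ?_ ?_
  · exact ((continuous_pow k).mul
      (Real.continuous_exp.comp (continuous_pow 2).neg)).aestronglyMeasurable
  · filter_upwards with x
    have h1 : |x| ^ k ≤ (k.factorial : ℝ) * Real.exp |x| := by
      have := Real.pow_div_factorial_le_exp (x := |x|) (abs_nonneg x) k
      have hk : (0:ℝ) < k.factorial := by positivity
      calc |x| ^ k = |x| ^ k / k.factorial * k.factorial := by field_simp
        _ ≤ Real.exp |x| * k.factorial := by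
            apply mul_le_mul_of_nonneg_right this hk.le
        _ = (k.factorial : ℝ) * Real.exp |x| := by ring
    have h2 : Real.exp |x| * Real.exp (-x ^ 2)
        ≤ Real.exp (1/4) * (Real.exp (-(x - 1/2) ^ 2) + Real.exp (-(x + 1/2) ^ 2)) := by
      rw [← Real.exp_add, mul_add, ← Real.exp_add, ← Real.exp_add]
      rcases abs_cases x with ⟨h, _⟩ | ⟨h, _⟩ <;> rw [h]
      · calc Real.exp (x + -x^2) ≤ Real.exp (1/4 + -(x - 1/2)^2) := Real.exp_le_exp.2 (by nlinarith)
          _ ≤ _ := le_add_of_nonneg_right (Real.exp_pos _).le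
      · calc Real.exp (-x + -x^2) ≤ Real.exp (1/4 + -(x + 1/2)^2) := Real.exp_le_exp.2 (by nlinarith)
          _ ≤ _ := le_add_of_nonneg_left (Real.exp_pos _).le
    calc ‖x ^ k * Real.exp (-x ^ 2)‖ = |x| ^ k * Real.exp (-x ^ 2) := by
          rw [norm_mul, Real.norm_eq_abs, Real.norm_eq_abs, abs_pow,
            abs_of_pos (Real.exp_pos _)]
      _ ≤ (k.factorial : ℝ) * Real.exp |x| * Real.exp (-x ^ 2) := by
          apply mul_le_mul_of_nonneg_right h1 (Real.exp_pos _).le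
      _ = (k.factorial : ℝ) * (Real.exp |x| * Real.exp (-x ^ 2)) := by ring
      _ ≤ _ := by
          rw [mul_assoc]
          apply mul_le_mul_of_nonneg_left h2 (by positivity)

lemma tendsto_pow_exp_atTop (k : ℕ) :
    Tendsto (fun x : ℝ => x ^ k * Real.exp (-x ^ 2)) atTop (nhds 0) := by
  have h2 : Tendsto (fun x : ℝ => Real.exp (-(1/2) * x)) atTop (nhds 0) := by
    apply Real.tendsto_exp_atBot.comp
    have := (tendsto_id (α := ℝ)).atTop_mul_const (show (0:ℝ) < 1/2 by norm_num)
    have h3 := tendsto_neg_atTop_atBot.comp this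
    refine h3.congr fun x => ?_
    simp [Function.comp]; ring
  have h := (rpow_mul_exp_neg_mul_sq_isLittleO_exp_neg one_pos (k:ℝ)).tendsto_zero_of_tendsto h2
  refine h.congr' ?_
  filter_upwards [eventually_gt_atTop (0:ℝ)] with x hx
  rw [Real.rpow_natCast]
  ring_nf

lemma tendsto_pow_exp_atBot (k : ℕ) :
    Tendsto (fun x : ℝ => x ^ k * Real.exp (-x ^ 2)) atBot (nhds 0) := by
  have h := ((tendsto_pow_exp_atTop k).comp tendsto_neg_atBot_atTop).const_mul ((-1:ℝ)^k)
  rw [mul_zero] at h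
  refine h.congr fun x => ?_
  simp only [Function.comp]
  rw [neg_sq, ← mul_assoc, ← mul_pow, neg_one_mul, neg_neg]

lemma integral_deriv_zero (F F' : ℝ → ℝ) (hd : ∀ x, HasDerivAt F (F' x) x)
    (hi : Integrable F') (ht : Tendsto F atTop (nhds 0)) (hb : Tendsto F atBot (nhds 0)) :
    ∫ x, F' x = 0 := by
  have h1 : ∫ x in Set.Ioi (0:ℝ), F' x = 0 - F 0 :=
    integral_Ioi_of_hasDerivAt_of_tendsto' (fun x _ => hd x) hi.integrableOn ht
  have h2 : ∫ x in Set.Iic (0:ℝ), F' x = F 0 - 0 :=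
    integral_Iic_of_hasDerivAt_of_tendsto' (fun x _ => hd x) hi.integrableOn hb
  rw [← intervalIntegral.integral_Iic_add_Ioi (b := (0:ℝ)) hi.integrableOn hi.integrableOn, h1, h2]
  ring

lemma hasDeriv_aux (m : ℕ) (x : ℝ) :
    HasDerivAt (fun x : ℝ => x ^ (m+1) * Real.exp (-x ^ 2))
      (((m:ℝ)+1) * x ^ m * Real.exp (-x ^ 2) - 2 * x ^ (m+2) * Real.exp (-x ^ 2)) x := by
  have h2 : HasDerivAt (fun x : ℝ => Real.exp (-x ^ 2))
      (Real.exp (-x ^ 2) * -(2 * x ^ 1)) x := by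
    have := ((hasDerivAt_pow 2 x).neg).exp
    simpa using this
  have h1 := hasDerivAt_pow (m+1) x
  have := h1.mul h2
  refine this.congr_deriv ?_
  simp only [Nat.add_sub_cancel]
  push_cast
  ring

lemma mu_rec (m : ℕ) :
    ∫ x : ℝ, x ^ (m+2) * Real.exp (-x ^ 2)
      = (((m:ℝ)+1)/2) * ∫ x : ℝ, x ^ m * Real.exp (-x ^ 2) := by
  have i1 : Integrable (fun x : ℝ => ((m:ℝ)+1) * x ^ m * Real.exp (-x ^ 2)) := by
    simpa [mul_assoc] using (integrable_pow_exp m).const_mul ((m:ℝ)+1)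
  have i2 : Integrable (fun x : ℝ => 2 * x ^ (m+2) * Real.exp (-x ^ 2)) := by
    simpa [mul_assoc] using (integrable_pow_exp (m+2)).const_mul 2
  have hz := integral_deriv_zero _ _ (hasDeriv_aux m) (i1.sub i2)
    (tendsto_pow_exp_atTop (m+1)) (tendsto_pow_exp_atBot (m+1))
  rw [integral_sub i1 i2] at hz
  simp only [mul_assoc] at hz
  rw [MeasureTheory.integral_const_mul, MeasureTheory.integral_const_mul] at hz
  linarith

lemma mu_one : ∫ x : ℝ, x ^ 1 * Real.exp (-x ^ 2) = 0 := by
  apply integral_deriv_zero (fun x : ℝ => (-1/2) * Real.exp (-x ^ 2))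
  · intro x
    have h2 : HasDerivAt (fun x : ℝ => Real.exp (-x ^ 2))
        (Real.exp (-x ^ 2) * -(2 * x ^ 1)) x := by
      simpa using ((hasDerivAt_pow 2 x).neg).exp
    have := h2.const_mul (-1/2 : ℝ)
    refine this.congr_deriv ?_
    ring
  · exact integrable_pow_exp 1
  · have := (tendsto_pow_exp_atTop 0).const_mul (-1/2 : ℝ)
    rw [mul_zero] at this
    refine this.congr fun x => ?_
    simp
  · have := (tendsto_pow_exp_atBot 0).const_mul (-1/2 : ℝ)
    rw [mul_zero] at this
    refine this.congr fun x => ?_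
    simp

lemma mu_closed : ∀ m : ℕ, (∫ x : ℝ, x ^ m * Real.exp (-x ^ 2)) = hermC m 0 * Real.sqrt Real.pi
  | 0 => by
      have h := integral_gaussian 1
      simp only [neg_mul, one_mul, div_one] at h
      simp only [pow_zero, one_mul]
      rw [show hermC 0 0 = 1 from rfl, one_mul]
      exact h
  | 1 => by
      rw [mu_one, show hermC 1 0 = (1/2) * hermC 0 1 from rfl,
        show hermC 0 1 = 0 from rfl]
      ring
  | (m+2) => by
      rw [mu_rec m, mu_closed m, hermC_step m]
      ring

lemma hermExpand (i j N : ℕ) :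
    ∑ k ∈ range (N+1), hermC (i+1) k * hermC j k * hermH k
      = (∑ k ∈ range N, hermC i k * hermC j (k+1) * hermH (k+1))
        + ∑ k ∈ range (N+1), hermC i (k+1) * hermC j k * hermH (k+1) := by
  rw [Finset.sum_range_succ' (fun k => hermC (i+1) k * hermC j k * hermH k) N,
      Finset.sum_range_succ' (fun k => hermC i (k+1) * hermC j k * hermH (k+1)) N]
  have h1 : ∀ k : ℕ, hermC (i+1) (k+1) * hermC j (k+1) * hermH (k+1)
      = hermC i k * hermC j (k+1) * hermH (k+1)
        + hermC i (k+2) * hermC j (k+1) * hermH (k+2) := by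
    intro k
    have hH : hermH (k+2) = (((k+1:ℕ):ℝ)+1)/2 * hermH (k+1) := rfl
    rw [hermC_succ_succ, hH]
    push_cast
    ring
  rw [Finset.sum_congr rfl (fun k _ => h1 k), Finset.sum_add_distrib]
  have e0 : hermC (i+1) 0 * hermC j 0 * hermH 0
      = hermC i 1 * hermC j 0 * hermH 1 := by
    rw [hermC_succ_zero, show hermH 1 = (((0:ℕ):ℝ)+1)/2 * hermH 0 from rfl]
    push_cast
    ring
  rw [e0]
  ring

lemma hermShift (i j N : ℕ) (hi : i + 1 ≤ N) (hj : j + 1 ≤ N) :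
    ∑ k ∈ range (N+1), hermC (i+1) k * hermC j k * hermH k
      = ∑ k ∈ range (N+1), hermC i k * hermC (j+1) k * hermH k := by
  rw [hermExpand i j N]
  rw [Finset.sum_congr rfl (fun k _ => mul_right_comm (hermC i k) (hermC (j+1) k) (hermH k)),
      show (∑ k ∈ range (N+1), hermC i k * hermH k * hermC (j+1) k)
        = ∑ k ∈ range (N+1), hermC (j+1) k * hermC i k * hermH k from
        Finset.sum_congr rfl (fun k _ => by ring)]
  rw [hermExpand j i N]
  rw [Finset.sum_range_succ (fun k => hermC i (k+1) * hermC j k * hermH (k+1)) N,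
      Finset.sum_range_succ (fun k => hermC j (k+1) * hermC i k * hermH (k+1)) N]
  rw [hermC_zero i (N+1) (by omega), hermC_zero j (N+1) (by omega)]
  simp only [zero_mul, mul_zero, add_zero]
  have hA : ∀ k, hermC i k * hermC j (k+1) * hermH (k+1)
      = hermC j (k+1) * hermC i k * hermH (k+1) := fun k => by ring
  rw [Finset.sum_congr rfl (fun k _ => hA k)]
  have hB : ∀ k, hermC i (k+1) * hermC j k * hermH (k+1)
      = hermC j k * hermC i (k+1) * hermH (k+1) := fun k => by ring
  rw [Finset.sum_congr rfl (fun k _ => hB k)]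
  ring

lemma hermT_eq : ∀ i j N : ℕ, i + j < N →
    ∑ k ∈ range N, hermC i k * hermC j k * hermH k
      = hermC (i+j) 0 * Real.sqrt Real.pi := by
  intro i
  induction i with
  | zero =>
    intro j N hN
    rw [Finset.sum_eq_single 0]
    · rw [show hermC 0 0 = 1 from rfl, show hermH 0 = Real.sqrt Real.pi from rfl, zero_add]
      ring
    · intro b _ hb
      match b, hb with
      | (b+1), _ => rw [show hermC 0 (b+1) = 0 from rfl]; ring
    · intro h
      exact absurd (Finset.mem_range.2 (by omega)) h
  | succ i ih =>
    intro j N hN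
    obtain ⟨M, rfl⟩ : ∃ M, N = M + 1 := ⟨N - 1, by omega⟩
    rw [hermShift i j M (by omega) (by omega), ih (j+1) (M+1) (by omega),
      show i + (j+1) = i + 1 + j from by omega]

lemma hermH_closed (k : ℕ) :
    hermH k = Real.sqrt Real.pi * (Nat.factorial k : ℝ) / 2 ^ k := by
  induction k with
  | zero => simp [hermH]
  | succ k ih =>
    rw [show hermH (k+1) = ((k:ℝ)+1)/2 * hermH k from rfl, ih, Nat.factorial_succ]
    push_cast
    field_simp
    ring

theorem hankel_det_hermite_weight (n : ℕ) :
    Matrix.det (Matrix.of fun i j : Fin n =>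
        ∫ x : ℝ, x ^ ((i : ℕ) + (j : ℕ)) * Real.exp (-x ^ 2))
      = Real.pi ^ ((n : ℝ) / 2) * ∏ i ∈ Finset.range n, (Nat.factorial i : ℝ) / 2 ^ i := by
  classical
  set C : Matrix (Fin n) (Fin n) ℝ := Matrix.of fun i k : Fin n => hermC i k with hC
  set D : Matrix (Fin n) (Fin n) ℝ := Matrix.diagonal fun k : Fin n => hermH k with hD
  have hM : (Matrix.of fun i j : Fin n =>
      ∫ x : ℝ, x ^ ((i : ℕ) + (j : ℕ)) * Real.exp (-x ^ 2)) = C * D * Cᵀ := by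
    ext i j
    rw [Matrix.mul_apply]
    simp only [Matrix.mul_diagonal, Matrix.transpose_apply, hC, hD, Matrix.of_apply]
    rw [mu_closed ((i : ℕ) + (j : ℕ))]
    rw [Fin.sum_univ_eq_sum_range (fun k => hermC i k * hermH k * hermC j k) n]
    have hcongr : ∀ k ∈ range n, hermC i k * hermH k * hermC j k
        = hermC i k * hermC j k * hermH k := fun k _ => by ring
    rw [Finset.sum_congr rfl hcongr]
    have hzero : ∀ k ∈ range ((i:ℕ) + (j:ℕ) + 1 + n), k ∉ range n →
        hermC i k * hermC j k * hermH k = 0 := by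
      intro k _ hk
      simp only [Finset.mem_range, not_lt] at hk
      rw [hermC_zero i k (by have := i.isLt; omega)]
      ring
    rw [Finset.sum_subset (Finset.range_subset_range.2
        (show n ≤ (i:ℕ) + (j:ℕ) + 1 + n by omega)) hzero]
    exact (hermT_eq i j ((i:ℕ) + (j:ℕ) + 1 + n) (by omega)).symm
  rw [hM, Matrix.det_mul, Matrix.det_mul, Matrix.det_transpose]
  have hCtri : C.BlockTriangular OrderDual.toDual := by
    intro i j h
    exact hermC_zero i j (by exact_mod_cast h)
  have hdetC : C.det = 1 := by
    rw [Matrix.det_of_lowerTriangular C hCtri]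
    simp only [hC, Matrix.of_apply, hermC_diag]
    exact Finset.prod_const_one
  have hdetD : D.det = ∏ k ∈ range n, hermH k := by
    rw [hD, Matrix.det_diagonal, Fin.prod_univ_eq_prod_range]
  rw [hdetC, hdetD, one_mul, mul_one]
  rw [Finset.prod_congr rfl (fun k _ => by
    rw [hermH_closed k, mul_div_assoc] :
    ∀ k ∈ range n, hermH k = Real.sqrt Real.pi * ((Nat.factorial k : ℝ) / 2 ^ k))]
  rw [Finset.prod_mul_distrib, Finset.prod_const, Finset.card_range]
  congr 1
  rw [Real.sqrt_eq_rpow, ← Real.rpow_natCast (Real.pi ^ (1/2:ℝ)) n,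
    ← Real.rpow_mul Real.pi_pos.le]
  congr 1
  ring
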